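/- arXiv:math-ph/0404009 — 4 statements merged into one kernel-verified Lean document; each statement's English description precedes it below -/
import Mathlib

section
/- For a finite-rank self-adjoint operator γ on a Hilbert space with spectral decomposition γ = Σ_n λ_n |ξ_n⟩⟨ξ_n| (orthonormal ξ_n), and γ' = Σ_ν λ'_ν |ξ'_ν⟩⟨ξ'_ν|, the exchange integral satisfies |∫∫ conj(γ(x,y)) γ'(x,y) / |x−y| dx dy| ≤ ∫∫ ρ_{|γ|}(x) ρ_{|γ'|}(y) / |x−y| dx dy, where γ(x,y) = Σ_n λ_n ξ_n(x) conj(ξ_n(y)) and ρ_{|γ|}(x) = Σ_n |λ_n| |ξ_n(x)|². -/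
open MeasureTheory

lemma cs_aux {N M : ℕ} (c : Fin N → ℝ) (c' : Fin M → ℝ)
    (hc : ∀ n, 0 ≤ c n) (hc' : ∀ ν, 0 ≤ c' ν)
    (u v : Fin N → ℝ) (u' v' : Fin M → ℝ) :
    (∑ n, c n * (u n * v n)) * (∑ ν, c' ν * (u' ν * v' ν)) ≤
      ((∑ n, c n * u n ^ 2) * (∑ ν, c' ν * v' ν ^ 2)
        + (∑ ν, c' ν * u' ν ^ 2) * (∑ n, c n * v n ^ 2)) / 2 := by
  rw [Finset.sum_mul_sum]
  have h : ∀ n ∈ Finset.univ, ∀ ν ∈ Finset.univ,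
      (c n * (u n * v n)) * (c' ν * (u' ν * v' ν)) ≤
        (c n * u n ^ 2 * (c' ν * v' ν ^ 2) + c' ν * u' ν ^ 2 * (c n * v n ^ 2)) / 2 := by
    intro n _ ν _
    nlinarith [mul_nonneg (mul_nonneg (hc n) (hc' ν)) (sq_nonneg (u n * v' ν - u' ν * v n))]
  calc ∑ n, ∑ ν, (c n * (u n * v n)) * (c' ν * (u' ν * v' ν))
      ≤ ∑ n, ∑ ν, (c n * u n ^ 2 * (c' ν * v' ν ^ 2) + c' ν * u' ν ^ 2 * (c n * v n ^ 2)) / 2 := by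
        apply Finset.sum_le_sum; intro n hn; exact Finset.sum_le_sum (h n hn)
    _ = _ := by
        have swap2 : ∑ i : Fin M, ∑ j : Fin N, c' i * u' i ^ 2 * (c j * v j ^ 2)
            = ∑ j : Fin N, ∑ i : Fin M, c' i * u' i ^ 2 * (c j * v j ^ 2) := Finset.sum_comm
        rw [Finset.sum_mul_sum, Finset.sum_mul_sum, swap2, ← Finset.sum_add_distrib,
          Finset.sum_div]
        apply Finset.sum_congr rfl; intro n _
        rw [← Finset.sum_add_distrib, Finset.sum_div]

/-- For finite-rank self-adjoint operators `γ = Σ λ_n |ξ_n⟩⟨ξ_n|` and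
`γ' = Σ λ'_ν |ξ'_ν⟩⟨ξ'_ν|` on `L²(ℝ³)` (given via their spectral decompositions with
orthonormal eigenfunctions), the exchange integral is dominated by the direct integral
of the densities of the moduli:
`|∫∫ conj(γ(x,y)) γ'(x,y)/|x−y| dx dy| ≤ ∫∫ ρ_{|γ|}(x) ρ_{|γ'|}(y)/|x−y| dx dy`. -/
theorem exchange_dominated_by_direct
    (N M : ℕ) (lam : Fin N → ℝ) (lam' : Fin M → ℝ)
    (ξ : Fin N → EuclideanSpace ℝ (Fin 3) → ℂ)
    (ξ' : Fin M → EuclideanSpace ℝ (Fin 3) → ℂ)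
    (hortho : ∀ i j, ∫ x, (starRingEnd ℂ) (ξ i x) * ξ j x = if i = j then 1 else 0)
    (hortho' : ∀ i j, ∫ x, (starRingEnd ℂ) (ξ' i x) * ξ' j x = if i = j then 1 else 0)
    (γker : EuclideanSpace ℝ (Fin 3) → EuclideanSpace ℝ (Fin 3) → ℂ)
    (γ'ker : EuclideanSpace ℝ (Fin 3) → EuclideanSpace ℝ (Fin 3) → ℂ)
    (hγ : ∀ x y, γker x y = ∑ n, (lam n : ℂ) * ξ n x * (starRingEnd ℂ) (ξ n y))
    (hγ' : ∀ x y, γ'ker x y = ∑ n, (lam' n : ℂ) * ξ' n x * (starRingEnd ℂ) (ξ' n y))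
    (ρ ρ' : EuclideanSpace ℝ (Fin 3) → ℝ)
    (hρ : ∀ x, ρ x = ∑ n, |lam n| * ‖ξ n x‖ ^ 2)
    (hρ' : ∀ x, ρ' x = ∑ n, |lam' n| * ‖ξ' n x‖ ^ 2)
    (hint : Integrable (fun p : EuclideanSpace ℝ (Fin 3) × EuclideanSpace ℝ (Fin 3) =>
      (starRingEnd ℂ) (γker p.1 p.2) * γ'ker p.1 p.2 / (‖p.1 - p.2‖ : ℂ)))
    (hint' : Integrable (fun p : EuclideanSpace ℝ (Fin 3) × EuclideanSpace ℝ (Fin 3) =>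
      ρ p.1 * ρ' p.2 / ‖p.1 - p.2‖)) :
    ‖∫ p : EuclideanSpace ℝ (Fin 3) × EuclideanSpace ℝ (Fin 3),
        (starRingEnd ℂ) (γker p.1 p.2) * γ'ker p.1 p.2 / (‖p.1 - p.2‖ : ℂ)‖
      ≤ ∫ p : EuclideanSpace ℝ (Fin 3) × EuclideanSpace ℝ (Fin 3),
          ρ p.1 * ρ' p.2 / ‖p.1 - p.2‖ := by
  have hvol : (volume : Measure (EuclideanSpace ℝ (Fin 3) × EuclideanSpace ℝ (Fin 3)))
      = (volume : Measure (EuclideanSpace ℝ (Fin 3))).prod volume :=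
    Measure.volume_eq_prod _ _
  set h1 : EuclideanSpace ℝ (Fin 3) × EuclideanSpace ℝ (Fin 3) → ℝ :=
    fun p => ρ p.1 * ρ' p.2 / ‖p.1 - p.2‖ with hh1
  set h2 : EuclideanSpace ℝ (Fin 3) × EuclideanSpace ℝ (Fin 3) → ℝ :=
    fun p => ρ' p.1 * ρ p.2 / ‖p.1 - p.2‖ with hh2
  have hswapfun : h2 = h1 ∘ Prod.swap := by
    funext p
    show ρ' p.1 * ρ p.2 / ‖p.1 - p.2‖ = ρ p.2 * ρ' p.1 / ‖p.2 - p.1‖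
    rw [norm_sub_rev]; ring
  have hint2 : Integrable h2 := by
    rw [hswapfun, hvol]
    exact (hvol ▸ hint' : Integrable h1 (volume.prod volume)).swap
  have hint2eq : ∫ p, h2 p = ∫ p, h1 p := by
    rw [hswapfun]
    calc ∫ p, (h1 ∘ Prod.swap) p = ∫ p, h1 p.swap ∂volume.prod volume := by rw [← hvol]; rfl
      _ = ∫ p, h1 p ∂volume.prod volume := integral_prod_swap h1
      _ = ∫ p, h1 p := by rw [← hvol]
  -- kernel bounds
  have kbound : ∀ x y, ‖γker x y‖ ≤ ∑ n, |lam n| * (‖ξ n x‖ * ‖ξ n y‖) := by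
    intro x y
    rw [hγ]
    refine (norm_sum_le _ _).trans (le_of_eq (Finset.sum_congr rfl fun n _ => ?_))
    simp [norm_mul, Complex.norm_real, mul_assoc]
  have kbound' : ∀ x y, ‖γ'ker x y‖ ≤ ∑ n, |lam' n| * (‖ξ' n x‖ * ‖ξ' n y‖) := by
    intro x y
    rw [hγ']
    refine (norm_sum_le _ _).trans (le_of_eq (Finset.sum_congr rfl fun n _ => ?_))
    simp [norm_mul, Complex.norm_real, mul_assoc]
  have prodbound : ∀ x y, ‖γker x y‖ * ‖γ'ker x y‖ ≤ (ρ x * ρ' y + ρ' x * ρ y) / 2 := by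
    intro x y
    calc ‖γker x y‖ * ‖γ'ker x y‖
        ≤ (∑ n, |lam n| * (‖ξ n x‖ * ‖ξ n y‖)) * (∑ n, |lam' n| * (‖ξ' n x‖ * ‖ξ' n y‖)) := by
          apply mul_le_mul (kbound x y) (kbound' x y) (norm_nonneg _)
          exact le_trans (norm_nonneg _) (kbound x y)
      _ ≤ ((∑ n, |lam n| * ‖ξ n x‖ ^ 2) * (∑ ν, |lam' ν| * ‖ξ' ν y‖ ^ 2)
            + (∑ ν, |lam' ν| * ‖ξ' ν x‖ ^ 2) * (∑ n, |lam n| * ‖ξ n y‖ ^ 2)) / 2 :=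
          cs_aux _ _ (fun n => abs_nonneg _) (fun ν => abs_nonneg _) _ _ _ _
      _ = (ρ x * ρ' y + ρ' x * ρ y) / 2 := by rw [hρ x, hρ' y, hρ' x, hρ y]
  -- pointwise bound on integrands
  have ptwise : ∀ p : EuclideanSpace ℝ (Fin 3) × EuclideanSpace ℝ (Fin 3),
      ‖(starRingEnd ℂ) (γker p.1 p.2) * γ'ker p.1 p.2 / (‖p.1 - p.2‖ : ℂ)‖
        ≤ (h1 p + h2 p) / 2 := by
    intro ⟨x, y⟩
    simp only [hh1, hh2, norm_div, norm_mul, RCLike.norm_conj, Complex.norm_real,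
      Real.norm_eq_abs, abs_norm]
    rcases eq_or_lt_of_le (norm_nonneg (x - y)) with hc | hc
    · rw [← hc]
      simp
    · rw [← add_div, div_right_comm]
      gcongr
      exact prodbound x y
  calc ‖∫ p : EuclideanSpace ℝ (Fin 3) × EuclideanSpace ℝ (Fin 3),
        (starRingEnd ℂ) (γker p.1 p.2) * γ'ker p.1 p.2 / (‖p.1 - p.2‖ : ℂ)‖
      ≤ ∫ p : EuclideanSpace ℝ (Fin 3) × EuclideanSpace ℝ (Fin 3),
          ‖(starRingEnd ℂ) (γker p.1 p.2) * γ'ker p.1 p.2 / (‖p.1 - p.2‖ : ℂ)‖ :=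
        norm_integral_le_integral_norm _
    _ ≤ ∫ p, (h1 p + h2 p) / 2 :=
        integral_mono hint.norm ((hint'.add hint2).div_const 2) ptwise
    _ = ∫ p, h1 p := by
        rw [integral_div, integral_add hint' hint2, hint2eq]
        ring
end

section
/- (Nenciu's lemma) Let P₀ be an orthogonal projection on a Hilbert space, A a bounded operator, and ε ∈ ℝ with 4|ε|‖A‖ < 1. Set a = P₀ A (1−P₀) + (1−P₀) A* P₀. Then there exists a bounded operator B_ε with ‖B_ε‖ ≤ 4‖A‖² such that P_ε := P₀ + ε a + ε² B_ε is an orthogonal projection. -/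
private lemma proj_norm_le {H : Type*} [NormedAddCommGroup H] [InnerProductSpace ℂ H]
    [CompleteSpace H] (P : H →L[ℂ] H) (hsa : IsSelfAdjoint P) (hid : IsIdempotentElem P)
    (w : H) : ‖P w‖ ≤ ‖w‖ := by
  have h1 : (inner ℂ (P w) (P w) : ℂ) = inner ℂ w (P (P w)) := by
    rw [← ContinuousLinearMap.adjoint_inner_right P, hsa.adjoint_eq]
  have h2 : P (P w) = P w := by
    have := congrArg (fun T : H →L[ℂ] H => T w) hid
    simpa [ContinuousLinearMap.mul_def] using this
  rw [h2] at h1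
  have h3 : ‖P w‖ ^ 2 = RCLike.re (inner ℂ w (P w) : ℂ) := by
    rw [← h1, inner_self_eq_norm_sq]
  have h4 : RCLike.re (inner ℂ w (P w) : ℂ) ≤ ‖w‖ * ‖P w‖ := by
    calc RCLike.re (inner ℂ w (P w) : ℂ) ≤ ‖(inner ℂ w (P w) : ℂ)‖ := RCLike.re_le_norm _
    _ ≤ ‖w‖ * ‖P w‖ := norm_inner_le_norm _ _
  nlinarith [norm_nonneg (P w), norm_nonneg w]

private lemma off_diag_norm_le {H : Type*} [NormedAddCommGroup H] [InnerProductSpace ℂ H]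
    [CompleteSpace H] (P A : H →L[ℂ] H) (hsa : IsSelfAdjoint P) (hid : IsIdempotentElem P) :
    ‖P ∘L A ∘L (1 - P) + (1 - P) ∘L (ContinuousLinearMap.adjoint A) ∘L P‖ ≤ ‖A‖ := by
  set Q : H →L[ℂ] H := 1 - P with hQ
  have hQsa : IsSelfAdjoint Q := by
    rw [IsSelfAdjoint, star_sub, hsa.star_eq, star_one]
  have hQid : IsIdempotentElem Q := hid.one_sub
  have happ : ∀ (T : H →L[ℂ] H), IsIdempotentElem T → ∀ z : H, T (T z) = T z := by
    intro T hT z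
    have := congrArg (fun S : H →L[ℂ] H => S z) hT
    simpa [ContinuousLinearMap.mul_def] using this
  have hPQ : ∀ z : H, P (Q z) = 0 := by
    intro z
    have : P (z - P z) = P z - P (P z) := map_sub P z (P z)
    simp [hQ, ContinuousLinearMap.sub_apply, this, happ P hid]
  have horth : ∀ y z : H, (inner ℂ (P y) (Q z) : ℂ) = 0 := by
    intro y z
    nth_rewrite 1 [← hsa.adjoint_eq]
    rw [ContinuousLinearMap.adjoint_inner_left, hPQ, inner_zero_right]
  refine ContinuousLinearMap.opNorm_le_bound _ (norm_nonneg A) fun x => ?_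
  have hxsq : ‖x‖ ^ 2 = ‖P x‖ ^ 2 + ‖Q x‖ ^ 2 := by
    have hx : x = P x + Q x := by simp [hQ, ContinuousLinearMap.sub_apply]
    have h0 : (inner ℂ (P x) (Q x) : ℂ) = 0 := horth x x
    nth_rewrite 1 [hx]
    rw [norm_add_sq (𝕜 := ℂ), h0]
    simp
  have happly : (P ∘L A ∘L Q + Q ∘L (ContinuousLinearMap.adjoint A) ∘L P) x
      = P (A (Q x)) + Q ((ContinuousLinearMap.adjoint A) (P x)) := rfl
  have hsq : ‖(P ∘L A ∘L Q + Q ∘L (ContinuousLinearMap.adjoint A) ∘L P) x‖ ^ 2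
      = ‖P (A (Q x))‖ ^ 2 + ‖Q ((ContinuousLinearMap.adjoint A) (P x))‖ ^ 2 := by
    rw [happly, norm_add_sq (𝕜 := ℂ), horth]
    simp
  have b1 : ‖P (A (Q x))‖ ≤ ‖A‖ * ‖Q x‖ := by
    calc ‖P (A (Q x))‖ ≤ ‖A (Q x)‖ := proj_norm_le P hsa hid _
    _ ≤ ‖A‖ * ‖Q x‖ := A.le_opNorm _
  have b2 : ‖Q ((ContinuousLinearMap.adjoint A) (P x))‖ ≤ ‖A‖ * ‖P x‖ := by
    calc ‖Q ((ContinuousLinearMap.adjoint A) (P x))‖ ≤ ‖(ContinuousLinearMap.adjoint A) (P x)‖ :=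
      proj_norm_le Q hQsa hQid _
    _ ≤ ‖ContinuousLinearMap.adjoint A‖ * ‖P x‖ := (ContinuousLinearMap.adjoint A).le_opNorm _
    _ = ‖A‖ * ‖P x‖ := by rw [ContinuousLinearMap.adjoint.norm_map]
  have hnn : (0:ℝ) ≤ ‖A‖ * ‖x‖ := by positivity
  have key : ‖(P ∘L A ∘L Q + Q ∘L (ContinuousLinearMap.adjoint A) ∘L P) x‖ ^ 2 ≤ (‖A‖ * ‖x‖)^2 := by
    have b1' : ‖P (A (Q x))‖^2 ≤ (‖A‖*‖Q x‖)^2 := pow_le_pow_left₀ (norm_nonneg _) b1 2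
    have b2' : ‖Q ((ContinuousLinearMap.adjoint A) (P x))‖^2 ≤ (‖A‖*‖P x‖)^2 :=
      pow_le_pow_left₀ (norm_nonneg _) b2 2
    rw [hsq]
    nlinarith [b1', b2', hxsq, sq_nonneg ‖A‖]
  nlinarith [norm_nonneg ((P ∘L A ∘L Q + Q ∘L (ContinuousLinearMap.adjoint A) ∘L P) x)]

private lemma sq_helper {R : Type*} [Ring R] [Algebra ℂ R] (p q : R)
    (hp : p * p = p) (hpq : p * q + q * p = q) :
    (p + q - (1/2:ℂ) • 1) * (p + q - (1/2:ℂ) • 1) = (1/4:ℂ) • 1 + q * q := by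
  have h1 : (p + q) * (p + q) = p + q + q * q := by
    rw [add_mul, mul_add, mul_add, hp,
      show p + p * q + (q * p + q * q) = p + (p * q + q * p) + q * q by abel, hpq]
  rw [sub_mul, mul_sub, mul_sub, h1, smul_mul_assoc, one_mul, mul_smul_comm, mul_one,
    smul_mul_assoc, one_mul, smul_smul]
  norm_num
  module

set_option maxHeartbeats 2000000 in
/-- Nenciu's lemma: Let `P₀` be an orthogonal projection on a Hilbert space,
`A` a bounded operator, and `ε ∈ ℝ` with `4|ε|‖A‖ < 1`. Set
`a = P₀ A (1−P₀) + (1−P₀) A* P₀`. Then there is a bounded operator `B_ε` with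
`‖B_ε‖ ≤ 4‖A‖²` such that `P_ε := P₀ + ε a + ε² B_ε` is an orthogonal projection. -/
theorem nenciu_lemma {H : Type*} [NormedAddCommGroup H] [InnerProductSpace ℂ H]
    [CompleteSpace H]
    (P₀ A : H →L[ℂ] H) (hP₀sa : IsSelfAdjoint P₀) (hP₀idem : IsIdempotentElem P₀)
    (ε : ℝ) (hε : 4 * |ε| * ‖A‖ < 1) :
    ∃ B : H →L[ℂ] H, ‖B‖ ≤ 4 * ‖A‖ ^ 2 ∧
      IsSelfAdjoint (P₀ + (ε : ℂ) • (P₀ ∘L A ∘L (1 - P₀) + (1 - P₀) ∘L (ContinuousLinearMap.adjoint A) ∘L P₀)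
          + ((ε : ℂ) ^ 2) • B) ∧
      IsIdempotentElem (P₀ + (ε : ℂ) • (P₀ ∘L A ∘L (1 - P₀) + (1 - P₀) ∘L (ContinuousLinearMap.adjoint A) ∘L P₀)
          + ((ε : ℂ) ^ 2) • B) := by
  by_cases hε0 : ε = 0
  · refine ⟨0, by simpa using by positivity, ?_, ?_⟩ <;>
    · simp only [hε0, Complex.ofReal_zero, zero_smul, smul_zero, add_zero]
      first
      | exact hP₀sa
      | exact hP₀idem
  -- notation
  have hεC : (ε : ℂ) ≠ 0 := by exact_mod_cast hε0
  set Ad := ContinuousLinearMap.adjoint A with hAd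
  set a : H →L[ℂ] H := P₀ ∘L A ∘L (1 - P₀) + (1 - P₀) ∘L Ad ∘L P₀ with ha
  have ha' : a = P₀ * A * (1 - P₀) + (1 - P₀) * Ad * P₀ := rfl
  have ha_sa : IsSelfAdjoint a := by
    rw [IsSelfAdjoint, ha', star_add, star_mul, star_mul, star_mul, star_mul]
    simp only [star_sub, star_one, hP₀sa.star_eq, ContinuousLinearMap.star_eq_adjoint, hAd,
      ContinuousLinearMap.adjoint_adjoint]
    noncomm_ring
  have ha_norm : ‖a‖ ≤ ‖A‖ := off_diag_norm_le P₀ A hP₀sa hP₀idem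
  have hP0Q : P₀ * (1 - P₀) = 0 := by rw [mul_sub, mul_one, hP₀idem, sub_self]
  have hQP0 : (1 - P₀) * P₀ = 0 := by rw [sub_mul, one_mul, hP₀idem, sub_self]
  have hPaP : P₀ * a + a * P₀ = a := by
    have e1 : P₀ * (P₀ * A * (1 - P₀)) = P₀ * A * (1 - P₀) := by
      rw [show P₀ * (P₀ * A * (1 - P₀)) = (P₀ * P₀) * (A * (1 - P₀)) by noncomm_ring, hP₀idem]
      noncomm_ring
    have e2 : P₀ * ((1 - P₀) * Ad * P₀) = 0 := by
      rw [show P₀ * ((1 - P₀) * Ad * P₀) = (P₀ * (1 - P₀)) * (Ad * P₀) by noncomm_ring, hP0Q,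
        zero_mul]
    have e3 : (P₀ * A * (1 - P₀)) * P₀ = 0 := by
      rw [show (P₀ * A * (1 - P₀)) * P₀ = (P₀ * A) * ((1 - P₀) * P₀) by noncomm_ring, hQP0,
        mul_zero]
    have e4 : ((1 - P₀) * Ad * P₀) * P₀ = (1 - P₀) * Ad * P₀ := by
      rw [show ((1 - P₀) * Ad * P₀) * P₀ = ((1 - P₀) * Ad) * (P₀ * P₀) by noncomm_ring, hP₀idem]
    rw [ha', mul_add, add_mul, e1, e2, e3, e4]
    abel
  obtain ⟨b, hb⟩ : ∃ b : H →L[ℂ] H, b = (ε : ℂ) • a := ⟨_, rfl⟩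
  have hb_sa : IsSelfAdjoint b := by
    rw [hb, IsSelfAdjoint, star_smul, ha_sa.star_eq]
    simp [Complex.star_def, Complex.conj_ofReal]
  have hPbP : P₀ * b + b * P₀ = b := by
    rw [hb, mul_smul_comm, smul_mul_assoc, ← smul_add, hPaP]
  obtain ⟨S, hS⟩ : ∃ S : H →L[ℂ] H, S = P₀ + b - (1/2:ℂ) • 1 := ⟨_, rfl⟩
  have hS_sa : IsSelfAdjoint S := by
    rw [hS, IsSelfAdjoint, star_sub, star_add, hP₀sa.star_eq, hb_sa.star_eq, star_smul, star_one]
    norm_num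
  have hS2 : S * S = algebraMap ℝ (H →L[ℂ] H) (1/4) + b * b := by
    have halg : algebraMap ℝ (H →L[ℂ] H) (1/4) = ((1/4 : ℝ):ℂ) • 1 := by
      rw [Algebra.algebraMap_eq_smul_one, ← IsScalarTower.algebraMap_smul ℂ (1/4 : ℝ)
        (1 : H →L[ℂ] H)]
      norm_num
    rw [hS, halg]
    push_cast
    exact sq_helper P₀ b hP₀idem hPbP
  -- the bound u
  obtain ⟨u, hu⟩ : ∃ u : ℝ, u = ε^2 * ‖A‖^2 := ⟨_, rfl⟩
  have hu0 : 0 ≤ u := by rw [hu]; positivity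
  have hbb_nonneg : (0 : H →L[ℂ] H) ≤ b * b := by
    have := star_mul_self_nonneg b
    rwa [hb_sa.star_eq] at this
  have hbb_norm : ‖b * b‖ ≤ u := by
    have h1 : ‖b‖ ≤ |ε| * ‖A‖ := by
      rw [hb, norm_smul]
      simp only [Complex.norm_real, Real.norm_eq_abs]
      exact mul_le_mul_of_nonneg_left ha_norm (abs_nonneg ε)
    calc ‖b * b‖ ≤ ‖b‖ * ‖b‖ := norm_mul_le b b
    _ ≤ (|ε| * ‖A‖) * (|ε| * ‖A‖) :=
        mul_le_mul h1 h1 (norm_nonneg b) (by positivity)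
    _ = u := by rw [hu]; rw [← sq_abs ε]; ring
  -- spectrum of S
  have hspecS : ∀ l ∈ spectrum ℝ S, 1/4 ≤ l * l ∧ l * l ≤ 1/4 + u := by
    intro l hl
    have hmem : l * l ∈ spectrum ℝ (S * S) := by
      have h1 : cfc (fun x : ℝ => x * x) S = S * S := by
        rw [cfc_mul (fun x : ℝ => x) (fun x : ℝ => x) S, cfc_id' ℝ S]
      rw [← h1, cfc_map_spectrum (fun x : ℝ => x * x) S]
      exact ⟨l, hl, rfl⟩
    rw [hS2, ← spectrum.singleton_add_eq] at hmem
    obtain ⟨x, hx, w, hw, hxw⟩ := Set.mem_add.mp hmem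
    rw [Set.mem_singleton_iff] at hx
    subst hx
    have hw0 : 0 ≤ w := spectrum_nonneg_of_nonneg hbb_nonneg hw
    have hwu : w ≤ u := by
      have := spectrum.norm_le_norm_mul_of_mem hw
      have h1 : ‖(1 : H →L[ℂ] H)‖ ≤ 1 := ContinuousLinearMap.norm_id_le
      rw [Real.norm_eq_abs, abs_of_nonneg hw0] at this
      nlinarith [norm_nonneg (b * b)]
    constructor <;> [linarith [hxw]; linarith [hxw]]
  -- the function f
  obtain ⟨f, hf⟩ : ∃ f : ℝ → ℝ, f = fun x : ℝ => max 0 (min 1 (x + 1/2)) := ⟨_, rfl⟩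
  have hfc : Continuous f := by rw [hf]; fun_prop
  have hfval : ∀ l ∈ spectrum ℝ S, (1/2 ≤ l ∧ f l = 1) ∨ (l ≤ -(1/2) ∧ f l = 0) := by
    intro l hl
    obtain ⟨h1, _⟩ := hspecS l hl
    rcases le_or_gt (1/2) l with hc | hc
    · refine Or.inl ⟨hc, ?_⟩
      simp only [hf]
      rw [min_eq_left (by linarith), max_eq_right (by norm_num)]
    · have hc2 : l ≤ -(1/2) := by nlinarith
      refine Or.inr ⟨hc2, ?_⟩
      simp only [hf]
      rw [min_eq_right (by linarith), max_eq_left (by linarith)]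
  obtain ⟨P, hP⟩ : ∃ P : H →L[ℂ] H, P = cfc f S := ⟨_, rfl⟩
  have hP_sa : IsSelfAdjoint P := hP ▸ cfc_predicate f S
  have hP_idem : IsIdempotentElem P := by
    rw [IsIdempotentElem, hP, ← cfc_mul f f S hfc.continuousOn hfc.continuousOn]
    refine cfc_congr fun l hl => ?_
    rcases hfval l hl with ⟨_, h⟩ | ⟨_, h⟩ <;> rw [h] <;> norm_num
  -- norm estimate
  have hdiff : ‖P - S - algebraMap ℝ (H →L[ℂ] H) (1/2)‖ ≤ u := by
    have h2 : cfc (fun x : ℝ => x + 1/2) S = S + algebraMap ℝ (H →L[ℂ] H) (1/2) := by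
      rw [cfc_add (a := S) (fun x : ℝ => x) (fun _ : ℝ => (1/2:ℝ)), cfc_id' ℝ S,
        cfc_const (1/2:ℝ) S]
    have h3 : P - S - algebraMap ℝ (H →L[ℂ] H) (1/2)
        = cfc (fun x : ℝ => f x - (x + 1/2)) S := by
      rw [hP, cfc_sub f (fun x : ℝ => x + 1/2) S hfc.continuousOn, h2]
      abel
    rw [h3]
    refine norm_cfc_le hu0 fun l hl => ?_
    obtain ⟨hl1, hl2⟩ := hspecS l hl
    rw [Real.norm_eq_abs]
    rcases hfval l hl with ⟨hc, hfl⟩ | ⟨hc, hfl⟩ <;> rw [hfl, abs_le] <;> constructor <;> nlinarith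
  -- assemble
  have halg2 : algebraMap ℝ (H →L[ℂ] H) (1/2) = (1/2:ℂ) • 1 := by
    rw [Algebra.algebraMap_eq_smul_one, ← IsScalarTower.algebraMap_smul ℂ (1/2 : ℝ)
      (1 : H →L[ℂ] H)]
    norm_num
  have hkey : P - (P₀ + b) = P - S - algebraMap ℝ (H →L[ℂ] H) (1/2) := by
    rw [halg2, hS]; abel
  refine ⟨((ε : ℂ) ^ 2)⁻¹ • (P - (P₀ + b)), ?_, ?_, ?_⟩
  · rw [norm_smul, hkey]
    have h1 : ‖((ε : ℂ) ^ 2)⁻¹‖ = (ε^2)⁻¹ := by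
      rw [norm_inv, norm_pow, Complex.norm_real, Real.norm_eq_abs, sq_abs]
    rw [h1]
    have h2 : (ε^2)⁻¹ * ‖P - S - algebraMap ℝ (H →L[ℂ] H) (1/2)‖ ≤ (ε^2)⁻¹ * u := by
      have : (0:ℝ) ≤ (ε^2)⁻¹ := by positivity
      exact mul_le_mul_of_nonneg_left hdiff this
    have h3 : (ε^2)⁻¹ * u = ‖A‖^2 := by
      rw [hu]
      field_simp
    nlinarith [sq_nonneg ‖A‖, h2, h3]
  all_goals {
    have heq : P₀ + (ε : ℂ) • (P₀ ∘L A ∘L (1 - P₀) + (1 - P₀) ∘L (ContinuousLinearMap.adjoint A) ∘L P₀)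
        + ((ε : ℂ) ^ 2) • (((ε : ℂ) ^ 2)⁻¹ • (P - (P₀ + b))) = P := by
      rw [← hAd, ← ha, ← hb, smul_inv_smul₀ (pow_ne_zero 2 hεC)]
      abel
    rw [heq]
    first
    | exact hP_sa
    | exact hP_idem
  }
end

section
/- Let u, v be orthonormal vectors in L²(ℝ³)⊗ℂ⁴ (sufficiently regular, e.g. in H¹), and set S = |u⟩⟨u| − |v⟩⟨v| with kernel S(x,y) = u(x)conj(u(y)) − v(x)conj(v(y)). Then Q[S,S] := D[ρ_S, ρ_S] − E[S,S] < 0, where D[ρ,σ] = (1/2)∫∫ conj(ρ(x))σ(y)/|x−y| dx dy with ρ_S(x) = |u(x)|² − |v(x)|², and E[S,S] = (1/2)∫∫ |S(x,y)|²/|x−y| dx dy. -/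
open MeasureTheory

noncomputable section

abbrev R3 := EuclideanSpace ℝ (Fin 3)
abbrev Spinor := EuclideanSpace ℂ (Fin 4)

set_option maxHeartbeats 1000000 in
/-- For orthonormal `u, v ∈ L²(ℝ³)⊗ℂ⁴` and `S = |u⟩⟨u| − |v⟩⟨v|` (with kernel
`S(x,y) = u(x)u(y)* − v(x)v(y)*`, density `ρ_S(x) = ‖u(x)‖² − ‖v(x)‖²`), the Hartree–Fock
interaction energy `Q[S,S] = D[ρ_S,ρ_S] − E[S,S]` is strictly negative, where
`D[ρ,ρ] = (1/2)∫∫ ρ(x)ρ(y)/|x−y|` and `E[S,S] = (1/2)∫∫ |S(x,y)|²/|x−y|`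
(so `|S(x,y)|² = ‖u(x)‖²‖u(y)‖² + ‖v(x)‖²‖v(y)‖² − 2Re(⟨v(x),u(x)⟩⟨u(y),v(y)⟩)`). -/
theorem QSS_negative
    (u v : R3 → Spinor)
    (hnu : ∫ x : R3, ‖u x‖ ^ 2 = 1) (hnv : ∫ x : R3, ‖v x‖ ^ 2 = 1)
    (horth : ∫ x : R3, (inner ℂ (u x) (v x) : ℂ) = 0)
    (huL2 : MemLp u 2 (volume : Measure R3)) (hvL2 : MemLp v 2 (volume : Measure R3))
    (hint_uu : Integrable (fun p : R3 × R3 => ‖u p.1‖ ^ 2 * ‖u p.2‖ ^ 2 / ‖p.1 - p.2‖))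
    (hint_vv : Integrable (fun p : R3 × R3 => ‖v p.1‖ ^ 2 * ‖v p.2‖ ^ 2 / ‖p.1 - p.2‖))
    (hint_uv : Integrable (fun p : R3 × R3 => ‖u p.1‖ ^ 2 * ‖v p.2‖ ^ 2 / ‖p.1 - p.2‖))
    (hint_ex : Integrable (fun p : R3 × R3 =>
      ((inner ℂ (v p.1) (u p.1) : ℂ) * (inner ℂ (u p.2) (v p.2) : ℂ)).re / ‖p.1 - p.2‖)) :
    (1 / 2) * (∫ p : R3 × R3,
        (‖u p.1‖ ^ 2 - ‖v p.1‖ ^ 2) * (‖u p.2‖ ^ 2 - ‖v p.2‖ ^ 2) / ‖p.1 - p.2‖)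
      - (1 / 2) * (∫ p : R3 × R3,
        (‖u p.1‖ ^ 2 * ‖u p.2‖ ^ 2 + ‖v p.1‖ ^ 2 * ‖v p.2‖ ^ 2
          - 2 * ((inner ℂ (v p.1) (u p.1) : ℂ) * (inner ℂ (u p.2) (v p.2) : ℂ)).re)
          / ‖p.1 - p.2‖) < 0 := by
  classical
  -- the "phase" function
  set z : R3 → ℂ := fun x => (inner ℂ (v x) (u x) : ℂ) with hz_def
  -- cross term
  have hcross : ∀ p : R3 × R3,
      ((inner ℂ (v p.1) (u p.1) : ℂ) * (inner ℂ (u p.2) (v p.2) : ℂ)).re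
        = (z p.1 * (starRingEnd ℂ) (z p.2)).re := by
    intro p
    simp only [hz_def, inner_conj_symm]
  -- swapped integrability
  have hint_vu : Integrable (fun p : R3 × R3 => ‖v p.1‖ ^ 2 * ‖u p.2‖ ^ 2 / ‖p.1 - p.2‖) := by
    rw [Measure.volume_eq_prod]
    have h := hint_uv
    rw [Measure.volume_eq_prod] at h
    refine h.swap.congr (Filter.Eventually.of_forall fun p => ?_)
    show ‖u p.2‖ ^ 2 * ‖v p.1‖ ^ 2 / ‖p.2 - p.1‖ = _
    rw [norm_sub_rev, mul_comm]
  -- the key nonnegative integrand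
  set g : R3 × R3 → ℝ := fun p =>
    (‖u p.1‖ ^ 2 * ‖v p.2‖ ^ 2 + ‖v p.1‖ ^ 2 * ‖u p.2‖ ^ 2
      - 2 * ((inner ℂ (v p.1) (u p.1) : ℂ) * (inner ℂ (u p.2) (v p.2) : ℂ)).re) / ‖p.1 - p.2‖
    with hg_def
  have hg_int : Integrable g := by
    have : g = fun p : R3 × R3 =>
        ‖u p.1‖ ^ 2 * ‖v p.2‖ ^ 2 / ‖p.1 - p.2‖ + ‖v p.1‖ ^ 2 * ‖u p.2‖ ^ 2 / ‖p.1 - p.2‖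
          - 2 * (((inner ℂ (v p.1) (u p.1) : ℂ) * (inner ℂ (u p.2) (v p.2) : ℂ)).re / ‖p.1 - p.2‖) := by
      funext p
      simp only [hg_def]; rw [sub_div, add_div]; ring
    rw [this]
    exact (hint_uv.add hint_vu).sub (hint_ex.const_mul 2)
  have hf2_int : Integrable (fun p : R3 × R3 =>
      (‖u p.1‖ ^ 2 * ‖u p.2‖ ^ 2 + ‖v p.1‖ ^ 2 * ‖v p.2‖ ^ 2
        - 2 * ((inner ℂ (v p.1) (u p.1) : ℂ) * (inner ℂ (u p.2) (v p.2) : ℂ)).re) / ‖p.1 - p.2‖) := by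
    have : (fun p : R3 × R3 =>
        (‖u p.1‖ ^ 2 * ‖u p.2‖ ^ 2 + ‖v p.1‖ ^ 2 * ‖v p.2‖ ^ 2
          - 2 * ((inner ℂ (v p.1) (u p.1) : ℂ) * (inner ℂ (u p.2) (v p.2) : ℂ)).re) / ‖p.1 - p.2‖)
        = fun p : R3 × R3 =>
        ‖u p.1‖ ^ 2 * ‖u p.2‖ ^ 2 / ‖p.1 - p.2‖ + ‖v p.1‖ ^ 2 * ‖v p.2‖ ^ 2 / ‖p.1 - p.2‖
          - 2 * (((inner ℂ (v p.1) (u p.1) : ℂ) * (inner ℂ (u p.2) (v p.2) : ℂ)).re / ‖p.1 - p.2‖) := by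
      funext p
      rw [sub_div, add_div]; ring
    rw [this]
    exact (hint_uu.add hint_vv).sub (hint_ex.const_mul 2)
  have hf1_eq : (fun p : R3 × R3 =>
      (‖u p.1‖ ^ 2 - ‖v p.1‖ ^ 2) * (‖u p.2‖ ^ 2 - ‖v p.2‖ ^ 2) / ‖p.1 - p.2‖)
      = fun p : R3 × R3 =>
      (‖u p.1‖ ^ 2 * ‖u p.2‖ ^ 2 + ‖v p.1‖ ^ 2 * ‖v p.2‖ ^ 2
        - 2 * ((inner ℂ (v p.1) (u p.1) : ℂ) * (inner ℂ (u p.2) (v p.2) : ℂ)).re) / ‖p.1 - p.2‖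
        - g p := by
    funext p
    simp only [hg_def]; rw [div_sub_div_same]
    congr 1
    ring
  have hIeq : (∫ p : R3 × R3,
      (‖u p.1‖ ^ 2 - ‖v p.1‖ ^ 2) * (‖u p.2‖ ^ 2 - ‖v p.2‖ ^ 2) / ‖p.1 - p.2‖)
      = (∫ p : R3 × R3,
        (‖u p.1‖ ^ 2 * ‖u p.2‖ ^ 2 + ‖v p.1‖ ^ 2 * ‖v p.2‖ ^ 2
          - 2 * ((inner ℂ (v p.1) (u p.1) : ℂ) * (inner ℂ (u p.2) (v p.2) : ℂ)).re) / ‖p.1 - p.2‖)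
        - ∫ p : R3 × R3, g p := by
    rw [hf1_eq]
    exact integral_sub hf2_int hg_int
  rw [hIeq]
  -- it suffices to show 0 < ∫ g
  have hmain : 0 < ∫ p : R3 × R3, g p := by
    -- Cauchy–Schwarz bound on the cross term
    have habs : ∀ x : R3, ‖z x‖ ≤ ‖u x‖ * ‖v x‖ := by
      intro x
      simpa [hz_def, mul_comm] using norm_inner_le_norm (𝕜 := ℂ) (v x) (u x)
    have hcle : ∀ p : R3 × R3,
        ((inner ℂ (v p.1) (u p.1) : ℂ) * (inner ℂ (u p.2) (v p.2) : ℂ)).re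
          ≤ (‖u p.1‖ * ‖v p.1‖) * (‖u p.2‖ * ‖v p.2‖) := by
      intro p
      rw [hcross p]
      have h1 : (z p.1 * (starRingEnd ℂ) (z p.2)).re ≤ ‖z p.1‖ * ‖z p.2‖ := by
        calc (z p.1 * (starRingEnd ℂ) (z p.2)).re
            ≤ |(z p.1 * (starRingEnd ℂ) (z p.2)).re| := le_abs_self _
          _ ≤ ‖z p.1 * (starRingEnd ℂ) (z p.2)‖ := Complex.abs_re_le_norm _
          _ = ‖z p.1‖ * ‖z p.2‖ := by
              rw [norm_mul, Complex.norm_conj]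
      exact h1.trans (mul_le_mul (habs _) (habs _) (norm_nonneg _)
        (mul_nonneg (norm_nonneg _) (norm_nonneg _)))
    have hg_nonneg : ∀ p : R3 × R3, 0 ≤ g p := by
      intro p
      simp only [hg_def]
      apply div_nonneg _ (norm_nonneg _)
      nlinarith [hcle p, sq_nonneg (‖u p.1‖ * ‖v p.2‖ - ‖v p.1‖ * ‖u p.2‖),
        norm_nonneg (u p.1), norm_nonneg (u p.2), norm_nonneg (v p.1), norm_nonneg (v p.2)]
    rcases (integral_nonneg (f := g) hg_nonneg).lt_or_eq with hpos | hzero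
    · exact hpos
    exfalso
    have hg0 : g =ᵐ[volume] 0 :=
      (integral_eq_zero_iff_of_nonneg hg_nonneg hg_int).1 hzero.symm
    -- a.e. points of the product are off-diagonal
    have hdiag : ∀ᵐ p : R3 × R3, p.1 ≠ p.2 := by
      rw [ae_iff]
      have hmeas : MeasurableSet {p : R3 × R3 | p.1 = p.2} :=
        (isClosed_eq continuous_fst continuous_snd).measurableSet
      have : {p : R3 × R3 | ¬ p.1 ≠ p.2} = {p : R3 × R3 | p.1 = p.2} := by
        ext p; simp
      rw [this, Measure.volume_eq_prod, Measure.prod_apply hmeas]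
      have : ∀ x : R3, (volume (Prod.mk x ⁻¹' {p : R3 × R3 | p.1 = p.2})) = 0 := by
        intro x
        have : (Prod.mk x ⁻¹' {p : R3 × R3 | p.1 = p.2}) = {x} := by
          ext y; simp [eq_comm]
        rw [this]
        exact measure_singleton x
      simp [this]
    -- pointwise pinned equality: ‖u x‖²‖v y‖² = cross term, a.e.
    have hkey : ∀ᵐ p : R3 × R3,
        ‖u p.1‖ ^ 2 * ‖v p.2‖ ^ 2 = (z p.1 * (starRingEnd ℂ) (z p.2)).re := by
      filter_upwards [hg0, hdiag] with p h0 hne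
      have hk : ‖p.1 - p.2‖ ≠ 0 := by
        simpa [sub_eq_zero] using hne
      have h0' : g p = 0 := h0
      simp only [hg_def] at h0'
      have hnum : ‖u p.1‖ ^ 2 * ‖v p.2‖ ^ 2 + ‖v p.1‖ ^ 2 * ‖u p.2‖ ^ 2
          - 2 * ((inner ℂ (v p.1) (u p.1) : ℂ) * (inner ℂ (u p.2) (v p.2) : ℂ)).re = 0 := by
        rcases div_eq_zero_iff.1 h0' with h | h
        · exact h
        · exact absurd h hk
      have hEq : ‖u p.1‖ * ‖v p.2‖ = ‖v p.1‖ * ‖u p.2‖ := by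
        nlinarith [hcle p, sq_nonneg (‖u p.1‖ * ‖v p.2‖ - ‖v p.1‖ * ‖u p.2‖)]
      have h2 : ‖v p.1‖ ^ 2 * ‖u p.2‖ ^ 2 = ‖u p.1‖ ^ 2 * ‖v p.2‖ ^ 2 := by
        rw [← mul_pow, ← mul_pow, ← hEq]
      rw [← hcross p]
      linarith
    -- integrability of z
    have hz_meas : AEStronglyMeasurable z volume := hvL2.1.inner huL2.1
    have hAB_int : Integrable (fun x : R3 => ‖v x‖ * ‖u x‖) := by
      have hpqr : (1 : ENNReal) / 1 = 1 / 2 + 1 / 2 := by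
        rw [ENNReal.add_halves, one_div_one]
      have h := (huL2.norm).smul (hvL2.norm) (r := 1)
      rw [← memLp_one_iff_integrable]
      exact h
    have hz_int : Integrable z := by
      refine Integrable.mono' hAB_int hz_meas (Filter.Eventually.of_forall fun x => ?_)
      exact norm_inner_le_norm (𝕜 := ℂ) (v x) (u x)
    have hzc_int : Integrable (fun x : R3 => (starRingEnd ℂ) (z x)) := by
      refine Integrable.mono' hAB_int (RCLike.continuous_conj.comp_aestronglyMeasurable hz_meas)
        (Filter.Eventually.of_forall fun x => ?_)
      simpa using norm_inner_le_norm (𝕜 := ℂ) (v x) (u x)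
    -- the integral of z vanishes by orthogonality
    have hz0 : ∫ x : R3, z x = 0 := by
      have : z = fun x => (starRingEnd ℂ) ((inner ℂ (u x) (v x) : ℂ)) := by
        funext x
        simp only [hz_def, inner_conj_symm]
      rw [this, integral_conj, horth, map_zero]
    -- hence the product integral of the cross term vanishes
    have hprod_int : Integrable (fun p : R3 × R3 => z p.1 * (starRingEnd ℂ) (z p.2)) := by
      rw [Measure.volume_eq_prod]
      exact hz_int.mul_prod hzc_int
    have hI0 : ∫ p : R3 × R3, (z p.1 * (starRingEnd ℂ) (z p.2)) = 0 := by
      rw [Measure.volume_eq_prod,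
        integral_prod_mul (f := z) (g := fun x : R3 => (starRingEnd ℂ) (z x)), hz0, zero_mul]
    have hc0 : ∫ p : R3 × R3, (z p.1 * (starRingEnd ℂ) (z p.2)).re = 0 := by
      have h := integral_re hprod_int
      rw [hI0] at h
      simpa using h
    -- but the product integral of ‖u x‖²‖v y‖² is 1
    have h1 : ∫ p : R3 × R3, ‖u p.1‖ ^ 2 * ‖v p.2‖ ^ 2 = 1 := by
      rw [Measure.volume_eq_prod,
        integral_prod_mul (f := fun x : R3 => ‖u x‖ ^ 2) (g := fun y : R3 => ‖v y‖ ^ 2),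
        hnu, hnv, one_mul]
    have hcontr := integral_congr_ae hkey
    rw [h1, hc0] at hcontr
    exact one_ne_zero hcontr
  linarith
end
end

section
/- Let Γ and Λ be orthogonal projections on a Hilbert space such that Γ − Λ is trace class. If Λ_ε is another orthogonal projection with ‖Λ − Λ_ε‖₁ < 1 (trace norm), then tr(Γ − Λ_ε) = tr(Γ − Λ). In particular, the map ε ↦ tr(Γ − Λ_ε) is locally constant along trace-norm-continuous families of projections. -/
open scoped InnerProductSpace

noncomputable section

variable {E : Type*} [NormedAddCommGroup E] [InnerProductSpace ℂ E] [CompleteSpace E]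

/-- `T` has a singular value decomposition with singular values `s` (so `T` is a
trace-class (indeed compact, with summable singular values) operator). -/
def HasSVD (T : E →L[ℂ] E) (s : ℕ → ℝ) : Prop :=
  ∃ e f : ℕ → E, Orthonormal ℂ e ∧ Orthonormal ℂ f ∧ (∀ n, 0 ≤ s n) ∧ Summable s ∧
    ∀ x, T x = ∑' n, ((s n : ℂ) * ⟪e n, x⟫_ℂ) • f n

set_option linter.unusedSectionVars false
set_option maxHeartbeats 1000000

lemma parseval_sq {ι : Type*} (b : HilbertBasis ι ℂ E) (u : E) :
    HasSum (fun i => ‖⟪b i, u⟫_ℂ‖^2) (‖u‖^2) := by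
  have h := (b.hasSum_inner_mul_inner u u).mapL Complex.reCLM
  convert h using 2 with i
  · rw [← inner_conj_symm u (b i)]
    have : ∀ z : ℂ, ‖z‖^2 = ((starRingEnd ℂ) z * z).re := by
      intro z
      rw [mul_comm, Complex.mul_conj]
      simp [Complex.normSq_eq_norm_sq]
      norm_cast
    exact this _
  · exact ((@inner_self_eq_norm_sq ℂ _ _ _ _ u)).symm

section SVD
variable {A : E →L[ℂ] E} {s : ℕ → ℝ} {e f : ℕ → E}
  (he : Orthonormal ℂ e) (hf : Orthonormal ℂ f) (hs : ∀ n, 0 ≤ s n) (hsum : Summable s)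
  (hA : ∀ x, A x = ∑' n, ((s n : ℂ) * ⟪e n, x⟫_ℂ) • f n)

include he hf hs hsum hA

lemma svd_norm_coe (n : ℕ) : ‖((s n : ℝ) : ℂ)‖ = s n := by
  simp [abs_of_nonneg (hs n)]

lemma svd_inner_le (X : E →L[ℂ] E) (n : ℕ) : ‖⟪e n, X (f n)⟫_ℂ‖ ≤ ‖X‖ :=
  calc ‖⟪e n, X (f n)⟫_ℂ‖ ≤ ‖e n‖ * ‖X (f n)‖ := norm_inner_le_norm _ _
    _ = ‖X (f n)‖ := by rw [he.1 n, one_mul]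
    _ ≤ ‖X‖ * ‖f n‖ := X.le_opNorm _
    _ = ‖X‖ := by rw [hf.1 n, mul_one]

lemma svd_term_norm_summable (x : E) :
    Summable (fun n => ‖((s n : ℂ) * ⟪e n, x⟫_ℂ) • f n‖) := by
  apply Summable.of_nonneg_of_le (fun n => norm_nonneg _) (fun n => ?_) (hsum.mul_right ‖x‖)
  rw [norm_smul, norm_mul, hf.1 n, mul_one, svd_norm_coe he hf hs hsum hA]
  apply mul_le_mul_of_nonneg_left _ (hs n)
  calc ‖⟪e n, x⟫_ℂ‖ ≤ ‖e n‖ * ‖x‖ := norm_inner_le_norm _ _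
    _ = ‖x‖ := by rw [he.1 n, one_mul]

lemma svd_term_summable (x : E) : Summable (fun n => ((s n : ℂ) * ⟪e n, x⟫_ℂ) • f n) :=
  (svd_term_norm_summable he hf hs hsum hA x).of_norm

lemma svd_phi_summable (X : E →L[ℂ] E) :
    Summable (fun n => (s n : ℂ) * ⟪e n, X (f n)⟫_ℂ) := by
  apply Summable.of_norm
  apply Summable.of_nonneg_of_le (fun n => norm_nonneg _) (fun n => ?_) (hsum.mul_right ‖X‖)
  rw [norm_mul, svd_norm_coe he hf hs hsum hA]
  exact mul_le_mul_of_nonneg_left (svd_inner_le he hf hs hsum hA X n) (hs n)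

lemma svd_phi_norm_le (X : E →L[ℂ] E) :
    ‖∑' n, (s n : ℂ) * ⟪e n, X (f n)⟫_ℂ‖ ≤ (∑' n, s n) * ‖X‖ := by
  calc ‖∑' n, (s n : ℂ) * ⟪e n, X (f n)⟫_ℂ‖ ≤ ∑' n, ‖(s n : ℂ) * ⟪e n, X (f n)⟫_ℂ‖ :=
        norm_tsum_le_tsum_norm (svd_phi_summable he hf hs hsum hA X).norm
    _ ≤ ∑' n, s n * ‖X‖ := by
        apply Summable.tsum_le_tsum _ (svd_phi_summable he hf hs hsum hA X).norm (hsum.mul_right _)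
        intro n
        rw [norm_mul, svd_norm_coe he hf hs hsum hA]
        exact mul_le_mul_of_nonneg_left (svd_inner_le he hf hs hsum hA X n) (hs n)
    _ = (∑' n, s n) * ‖X‖ := tsum_mul_right

lemma svd_opNorm_le : ‖A‖ ≤ ∑' n, s n := by
  apply A.opNorm_le_bound (tsum_nonneg hs)
  intro x
  rw [hA x]
  calc ‖∑' n, ((s n : ℂ) * ⟪e n, x⟫_ℂ) • f n‖ ≤ ∑' n, ‖((s n : ℂ) * ⟪e n, x⟫_ℂ) • f n‖ :=
        norm_tsum_le_tsum_norm (svd_term_norm_summable he hf hs hsum hA x)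
    _ ≤ ∑' n, s n * ‖x‖ := by
        apply Summable.tsum_le_tsum _ (svd_term_norm_summable he hf hs hsum hA x) (hsum.mul_right _)
        intro n
        rw [norm_smul, norm_mul, hf.1 n, mul_one, svd_norm_coe he hf hs hsum hA]
        apply mul_le_mul_of_nonneg_left _ (hs n)
        calc ‖⟪e n, x⟫_ℂ‖ ≤ ‖e n‖ * ‖x‖ := norm_inner_le_norm _ _
          _ = ‖x‖ := by rw [he.1 n, one_mul]
    _ = (∑' n, s n) * ‖x‖ := tsum_mul_right

lemma svd_phi_add (X Y : E →L[ℂ] E) :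
    (∑' n, (s n : ℂ) * ⟪e n, (X + Y) (f n)⟫_ℂ)
      = (∑' n, (s n : ℂ) * ⟪e n, X (f n)⟫_ℂ) + ∑' n, (s n : ℂ) * ⟪e n, Y (f n)⟫_ℂ := by
  rw [← Summable.tsum_add (svd_phi_summable he hf hs hsum hA X) (svd_phi_summable he hf hs hsum hA Y)]
  congr 1; ext n
  simp [ContinuousLinearMap.add_apply, inner_add_right, mul_add]

lemma svd_phi_neg (X : E →L[ℂ] E) :
    (∑' n, (s n : ℂ) * ⟪e n, (-X) (f n)⟫_ℂ) = -∑' n, (s n : ℂ) * ⟪e n, X (f n)⟫_ℂ := by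
  rw [← tsum_neg]
  congr 1; ext n
  simp [inner_neg_right]

lemma svd_apply_inner (X : E →L[ℂ] E) (v x : E) :
    ⟪v, X (A x)⟫_ℂ = ∑' n, (s n : ℂ) * ⟪e n, x⟫_ℂ * ⟪v, X (f n)⟫_ℂ := by
  rw [hA x]
  have hsm := (svd_term_norm_summable he hf hs hsum hA x).of_norm
  have h := hsm.hasSum.mapL ((innerSL ℂ v).comp X)
  rw [show ⟪v, X (∑' n, ((s n : ℂ) * ⟪e n, x⟫_ℂ) • f n)⟫_ℂ
      = ((innerSL ℂ v).comp X) (∑' n, ((s n : ℂ) * ⟪e n, x⟫_ℂ) • f n) from rfl, ← h.tsum_eq]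
  congr 1; ext n
  simp [mul_comm, mul_assoc]

lemma svd_key {ι : Type*} (b : HilbertBasis ι ℂ E) (X Y : E →L[ℂ] E) :
    HasSum (fun i => ⟪b i, (X * A * Y) (b i)⟫_ℂ)
      (∑' n, (s n : ℂ) * ⟪e n, (Y * X) (f n)⟫_ℂ) := by
  classical
  set u : ℕ → E := fun n => (ContinuousLinearMap.adjoint Y) (e n) with hu
  set v : ℕ → E := fun n => X (f n) with hv
  set G : ℕ × ι → ℂ := fun p => (s p.1 : ℂ) * ⟪e p.1, Y (b p.2)⟫_ℂ * ⟪b p.2, X (f p.1)⟫_ℂ with hG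
  have hinner : ∀ n i, ⟪e n, Y (b i)⟫_ℂ = ⟪u n, b i⟫_ℂ := by
    intro n i
    rw [hu, ContinuousLinearMap.adjoint_inner_left]
  have hGnorm : ∀ n i, ‖G (n, i)‖ = s n * (‖⟪b i, u n⟫_ℂ‖ * ‖⟪b i, v n⟫_ℂ‖) := by
    intro n i
    rw [hG]
    simp only [norm_mul, svd_norm_coe he hf hs hsum hA, hinner n i, ← hv]
    rw [norm_inner_symm (u n) (b i), mul_assoc]
  have hGle : ∀ n i, ‖G (n, i)‖ ≤ s n * ((‖⟪b i, u n⟫_ℂ‖^2 + ‖⟪b i, v n⟫_ℂ‖^2)/2) := by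
    intro n i
    rw [hGnorm n i]
    apply mul_le_mul_of_nonneg_left _ (hs n)
    nlinarith [sq_nonneg (‖⟪b i, u n⟫_ℂ‖ - ‖⟪b i, v n⟫_ℂ‖), norm_nonneg (⟪b i, u n⟫_ℂ), norm_nonneg (⟪b i, v n⟫_ℂ)]
  have hfib : ∀ n, HasSum (fun i => s n * ((‖⟪b i, u n⟫_ℂ‖^2 + ‖⟪b i, v n⟫_ℂ‖^2)/2))
      (s n * ((‖u n‖^2 + ‖v n‖^2)/2)) := fun n =>
    (((parseval_sq b (u n)).add (parseval_sq b (v n))).div_const 2).mul_left (s n)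
  have h1 : ∀ n, Summable fun i => ‖G (n, i)‖ := fun n =>
    Summable.of_nonneg_of_le (fun i => norm_nonneg _) (hGle n) (hfib n).summable
  set C : ℝ := (‖ContinuousLinearMap.adjoint Y‖^2 + ‖X‖^2)/2 with hC
  have h2 : Summable fun n => ∑' i, ‖G (n, i)‖ := by
    apply Summable.of_nonneg_of_le (fun n => tsum_nonneg (fun i => norm_nonneg _))
      (fun n => ?_) (hsum.mul_right C)
    calc ∑' i, ‖G (n, i)‖ ≤ s n * ((‖u n‖^2 + ‖v n‖^2)/2) := by
          rw [← (hfib n).tsum_eq]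
          exact Summable.tsum_le_tsum (hGle n) (h1 n) (hfib n).summable
      _ ≤ s n * C := by
          apply mul_le_mul_of_nonneg_left _ (hs n)
          have hun : ‖u n‖ ≤ ‖ContinuousLinearMap.adjoint Y‖ := by
            calc ‖u n‖ ≤ ‖ContinuousLinearMap.adjoint Y‖ * ‖e n‖ :=
                  (ContinuousLinearMap.adjoint Y).le_opNorm _
              _ = _ := by rw [he.1 n, mul_one]
          have hvn : ‖v n‖ ≤ ‖X‖ := by
            calc ‖v n‖ ≤ ‖X‖ * ‖f n‖ := X.le_opNorm _
              _ = _ := by rw [hf.1 n, mul_one]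
          have b1 := pow_le_pow_left₀ (norm_nonneg (u n)) hun 2
          have b2 := pow_le_pow_left₀ (norm_nonneg (v n)) hvn 2
          rw [hC]; linarith
  have hGn : Summable fun p : ℕ × ι => ‖G p‖ :=
    (summable_prod_of_nonneg (fun p => norm_nonneg _)).mpr ⟨h1, h2⟩
  have hGsmall : Summable G := hGn.of_norm
  have hswap : Summable (fun p : ι × ℕ => G p.swap) := hGsmall.prod_symm
  have hfib2 : ∀ i, HasSum (fun n => G (n, i)) (∑' n, G (n, i)) := fun i =>
    (hswap.prod_factor i).hasSum
  have hmain : HasSum (fun i => ∑' n, G (n, i)) (∑' p : ι × ℕ, G p.swap) :=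
    HasSum.prod_fiberwise hswap.hasSum hfib2
  have hfun : (fun i => ∑' n, G (n, i)) = fun i => ⟪b i, (X * A * Y) (b i)⟫_ℂ := by
    ext i
    rw [show (X * A * Y) (b i) = X (A (Y (b i))) from rfl,
      svd_apply_inner he hf hs hsum hA X (b i) (Y (b i))]
  have hval : (∑' p : ι × ℕ, G p.swap) = ∑' n, (s n : ℂ) * ⟪e n, (Y * X) (f n)⟫_ℂ := by
    have e1 : (∑' p : ι × ℕ, G p.swap) = ∑' p : ℕ × ι, G p := by
      exact (Equiv.prodComm ι ℕ).tsum_eq G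
    rw [e1, Summable.tsum_prod hGsmall]
    congr 1; ext n
    have e2 : ∀ i, G (n, i) = (s n : ℂ) * (⟪u n, b i⟫_ℂ * ⟪b i, v n⟫_ℂ) := by
      intro i
      rw [hG]
      simp only [hinner n i, mul_assoc]
      rfl
    simp only [e2]
    rw [tsum_mul_left, (b.hasSum_inner_mul_inner (u n) (v n)).tsum_eq]
    congr 1
    rw [hu, ContinuousLinearMap.adjoint_inner_left]
    rfl
  rw [hfun, hval] at hmain
  exact hmain

end SVD

/-- Let `Γ`, `Λ` be orthogonal projections with `Γ − Λ` trace class. If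
`Λ_ε` is another orthogonal projection with trace-norm distance `‖Λ − Λ_ε‖₁ < 1` from
`Λ` (in particular `Γ − Λ_ε` is trace class), then `tr(Γ − Λ_ε) = tr(Γ − Λ)` (traces
computed in any fixed Hilbert basis). -/
theorem trace_locally_constant {ι : Type*}
    (Γ Λ Λε : E →L[ℂ] E)
    (hΓ : IsSelfAdjoint Γ ∧ IsIdempotentElem Γ)
    (hΛ : IsSelfAdjoint Λ ∧ IsIdempotentElem Λ)
    (hΛε : IsSelfAdjoint Λε ∧ IsIdempotentElem Λε)
    (hTC1 : ∃ s : ℕ → ℝ, HasSVD (Γ - Λ) s)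
    (hTC2 : ∃ s : ℕ → ℝ, HasSVD (Γ - Λε) s)
    (hsmall : ∃ s : ℕ → ℝ, HasSVD (Λ - Λε) s ∧ (∑' n, s n) < 1)
    (b : HilbertBasis ι ℂ E) (t1 t2 : ℂ)
    (ht1 : HasSum (fun i => ⟪b i, (Γ - Λ) (b i)⟫_ℂ) t1)
    (ht2 : HasSum (fun i => ⟪b i, (Γ - Λε) (b i)⟫_ℂ) t2) :
    t2 = t1 := by
  obtain ⟨s, ⟨e, f, he, hf, hs, hsum, hA⟩, hS1⟩ := hsmall
  set A : E →L[ℂ] E := Λ - Λε with hAdef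
  set B : E →L[ℂ] E := 1 - Λ - Λε with hBdef
  have hΛ2 : Λ * Λ = Λ := hΛ.2
  have hΛε2 : Λε * Λε = Λε := hΛε.2
  -- algebraic identities
  have hBA : B * A = -(A * B) := by
    have h : B * A + A * B = 0 := by
      rw [hBdef, hAdef]
      simp only [sub_mul, mul_sub, one_mul, mul_one, hΛ2, hΛε2]
      abel
    exact eq_neg_of_add_eq_zero_left h
  have hABsq : A * A + B * B = 1 := by
    rw [hBdef, hAdef]
    simp only [sub_mul, mul_sub, one_mul, mul_one, hΛ2, hΛε2]
    abel
  have hcomm : Commute B (A * A) := by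
    show B * (A * A) = (A * A) * B
    calc B * (A * A) = (B * A) * A := by rw [mul_assoc]
      _ = (-(A * B)) * A := by rw [hBA]
      _ = -(A * (B * A)) := by noncomm_ring
      _ = -(A * (-(A * B))) := by rw [hBA]
      _ = (A * A) * B := by noncomm_ring
  -- the trace functional
  set φ : (E →L[ℂ] E) → ℂ := fun X => ∑' n, (s n : ℂ) * ⟪e n, X (f n)⟫_ℂ with hφ
  have phi_add : ∀ X Y : E →L[ℂ] E, φ (X + Y) = φ X + φ Y := fun X Y =>
    svd_phi_add he hf hs hsum hA X Y
  have phi_neg : ∀ X : E →L[ℂ] E, φ (-X) = -φ X := fun X =>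
    svd_phi_neg he hf hs hsum hA X
  have cyclic : ∀ X Y X' Y' : E →L[ℂ] E, X * A * Y = X' * A * Y' → φ (Y * X) = φ (Y' * X') := by
    intro X Y X' Y' h
    have k1 := svd_key he hf hs hsum hA b X Y
    have k2 := svd_key he hf hs hsum hA b X' Y'
    rw [h] at k1
    exact k1.unique k2
  -- vanishing of the cross terms
  have hq : ∀ k : ℕ, φ ((A * A)^k * (B * B)) = 0 := by
    intro k
    set Ck : E →L[ℂ] E := (A * A)^k with hCk
    have hcommk : B * Ck = Ck * B := (hcomm.pow_right k).eq
    have hop : (Ck * B) * A * B = (-Ck) * A * (B * B) := by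
      calc (Ck * B) * A * B = Ck * (B * A) * B := by noncomm_ring
        _ = Ck * (-(A * B)) * B := by rw [hBA]
        _ = (-Ck) * A * (B * B) := by noncomm_ring
    have h0 := cyclic _ _ _ _ hop
    have e1 : B * (Ck * B) = Ck * (B * B) := by rw [← mul_assoc, hcommk, mul_assoc]
    have e2 : (B * B) * (-Ck) = -(Ck * (B * B)) := by
      have h3 : (B * B) * Ck = Ck * (B * B) := by
        rw [mul_assoc, hcommk, ← mul_assoc, hcommk, mul_assoc]
      calc (B * B) * (-Ck) = -((B * B) * Ck) := by noncomm_ring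
        _ = -(Ck * (B * B)) := by rw [h3]
    rw [e1, e2, phi_neg] at h0
    -- h0 : φ (Ck * (B * B)) = -φ (Ck * (B * B))
    linear_combination h0 / 2
  -- the trace is invariant along even powers
  have hτ : ∀ k : ℕ, φ ((A * A)^k) = φ 1 := by
    intro k
    induction k with
    | zero => rw [pow_zero]
    | succ k ih =>
      have hsplit : (A * A)^(k + 1) + (A * A)^k * (B * B) = (A * A)^k := by
        rw [pow_succ, ← mul_add, hABsq, mul_one]
      calc φ ((A * A)^(k + 1)) = φ ((A * A)^(k + 1)) + φ ((A * A)^k * (B * B)) := by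
            rw [hq k, add_zero]
        _ = φ ((A * A)^(k + 1) + (A * A)^k * (B * B)) := (phi_add _ _).symm
        _ = φ ((A * A)^k) := by rw [hsplit]
        _ = φ 1 := ih
  -- norm bounds
  set S : ℝ := ∑' n, s n with hSdef
  have hSnn : 0 ≤ S := tsum_nonneg hs
  have hAle : ‖A‖ ≤ S := svd_opNorm_le he hf hs hsum hA
  have hAAle : ‖A * A‖ ≤ S * S :=
    le_trans (norm_mul_le A A) (mul_le_mul hAle hAle (norm_nonneg A) hSnn)
  have hpow : ∀ k : ℕ, ‖(A * A)^k‖ ≤ (S * S)^k := by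
    intro k
    induction k with
    | zero => rw [pow_zero, pow_zero]; exact ContinuousLinearMap.norm_id_le
    | succ k ih =>
      calc ‖(A * A)^(k + 1)‖ = ‖(A * A)^k * (A * A)‖ := by rw [pow_succ]
        _ ≤ ‖(A * A)^k‖ * ‖A * A‖ := norm_mul_le _ _
        _ ≤ (S * S)^k * (S * S) := mul_le_mul ih hAAle (norm_nonneg _) (pow_nonneg (by positivity) k)
        _ = (S * S)^(k + 1) := by rw [pow_succ]
  have hbound : ∀ k : ℕ, ‖φ 1‖ ≤ S * (S * S)^k := by
    intro k
    rw [← hτ k]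
    calc ‖φ ((A * A)^k)‖ ≤ S * ‖(A * A)^k‖ := svd_phi_norm_le he hf hs hsum hA _
      _ ≤ S * (S * S)^k := mul_le_mul_of_nonneg_left (hpow k) hSnn
  -- conclude φ 1 = 0
  have hSS1 : S * S < 1 := by nlinarith
  have hlim : Filter.Tendsto (fun k : ℕ => S * (S * S)^k) Filter.atTop (nhds 0) := by
    have := (tendsto_pow_atTop_nhds_zero_of_lt_one (by positivity) hSS1).const_mul S
    simpa using this
  have hφ10 : φ 1 = 0 := by
    have hle : ‖φ 1‖ ≤ 0 := ge_of_tendsto hlim (Filter.Eventually.of_forall hbound)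
    simpa using norm_le_zero_iff.mp hle
  -- relate to the given sums
  have hstep1 : HasSum (fun i => ⟪b i, A (b i)⟫_ℂ) (t2 - t1) := by
    have h := ht2.sub ht1
    convert h using 2 with i
    case e'_3 => rfl
    rw [hAdef]
    simp only [ContinuousLinearMap.sub_apply, inner_sub_right, ContinuousLinearMap.one_apply]
    ring
  have hkey := svd_key he hf hs hsum hA b 1 1
  rw [one_mul, mul_one, one_mul] at hkey
  have : t2 - t1 = φ 1 := hstep1.unique hkey
  rw [hφ10] at this
  exact sub_eq_zero.mp this
end
end
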